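/- Let H = H_1 ⊗ H_2 ⊗ ⋯ ⊗ H_k be a tensor product of finite-dimensional complex Hilbert spaces, let T ⊆ {1, …, k}, and for an operator A on H define the normalized partial trace 𝑡𝑟̃_T(A) := (⊗_{i∈T} 1_{H_i}/dim H_i) ⊗ tr_T(A), where tr_T is the partial trace over the factors in T. Then for every operator A on H, ‖𝑡𝑟̃_T(A) − A‖ ≤ ∑_{i∈T} sup{‖[A, u]‖ : u a unitary on H supported on the i-th factor}, where ‖·‖ is the operator norm and an operator is supported on the i-th factor if it acts as the identity on all other factors. -/

import Mathlib

open scoped Classical ComplexOrder Matrix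
noncomputable section

namespace CMI

/-- The operator norm of a complex matrix (norm of the induced map on Euclidean space). -/
def opNorm {n : Type*} [Fintype n] [DecidableEq n] (A : Matrix n n ℂ) : ℝ :=
  ‖LinearMap.toContinuousLinearMap (Matrix.toEuclideanLin A)‖

variable {k : ℕ} {d : Fin k → ℕ}

/-- Override the values of a configuration on `T` by a partial configuration. -/
def ovr (T : Finset (Fin k)) (x : (i : Fin k) → Fin (d i))
    (z : (i : {j // j ∈ T}) → Fin (d i)) : (i : Fin k) → Fin (d i) :=
  fun i => if h : i ∈ T then z ⟨i, h⟩ else x i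

/-- The normalized partial trace `𝑡𝑟̃_T(A) = (⊗_{i∈T} 1/dim H_i) ⊗ tr_T(A)`. -/
def ntrace (T : Finset (Fin k))
    (A : Matrix ((i : Fin k) → Fin (d i)) ((i : Fin k) → Fin (d i)) ℂ) :
    Matrix ((i : Fin k) → Fin (d i)) ((i : Fin k) → Fin (d i)) ℂ :=
  fun x y =>
    if ∀ i ∈ T, x i = y i then
      ((∏ i ∈ T, (d i : ℂ)))⁻¹ *
        ∑ z : (i : {j // j ∈ T}) → Fin (d i), A (ovr T x z) (ovr T y z)
    else 0

/-- An operator is supported on the `i`-th tensor factor. -/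
def FactorSupported (i : Fin k)
    (u : Matrix ((j : Fin k) → Fin (d j)) ((j : Fin k) → Fin (d j)) ℂ) : Prop :=
  ∃ f : Matrix (Fin (d i)) (Fin (d i)) ℂ, ∀ x y,
    u x y = if ∀ j, j ≠ i → x j = y j then f (x i) (y i) else 0

open scoped Matrix.Norms.L2Operator
open Finset Function

/-- Configurations. -/
abbrev Cfg (d : Fin k → ℕ) := (i : Fin k) → Fin (d i)

/-- Matrices on the full tensor product space. -/
abbrev Mat (d : Fin k → ℕ) := Matrix (Cfg d) (Cfg d) ℂ

lemma opNorm_eq {n : Type*} [Fintype n] [DecidableEq n] (A : Matrix n n ℂ) :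
    opNorm A = ‖A‖ := rfl

lemma norm_one_le (n : Type*) [Fintype n] [DecidableEq n] :
    ‖(1 : Matrix n n ℂ)‖ ≤ 1 := by
  rw [Matrix.cstar_norm_def, map_one]
  exact ContinuousLinearMap.norm_id_le

lemma norm_le_one_of_unitary {n : Type*} [Fintype n] [DecidableEq n]
    {u : Matrix n n ℂ} (hu : uᴴ * u = 1) : ‖u‖ ≤ 1 := by
  have h1 : ‖u‖ * ‖u‖ = ‖uᴴ * u‖ := (Matrix.l2_opNorm_conjTranspose_mul_self u).symm
  rw [hu] at h1
  have h2 := norm_one_le n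
  nlinarith [norm_nonneg u]

/-- Embed a matrix on the `i`-th factor into the full tensor product. -/
def embed (i : Fin k) (f : Matrix (Fin (d i)) (Fin (d i)) ℂ) : Mat d :=
  fun x y => if ∀ j, j ≠ i → x j = y j then f (x i) (y i) else 0

lemma factorSupported_embed (i : Fin k) (f : Matrix (Fin (d i)) (Fin (d i)) ℂ) :
    FactorSupported i (embed i f) := ⟨f, fun _ _ => rfl⟩

lemma embed_one (i : Fin k) : embed (d := d) i 1 = 1 := by
  ext x y
  unfold embed
  by_cases h : ∀ j, j ≠ i → x j = y j
  · rw [if_pos h, Matrix.one_apply, Matrix.one_apply]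
    by_cases hxy : x i = y i
    · have hx : x = y := funext fun j => by
        by_cases hj : j = i
        · subst hj; exact hxy
        · exact h j hj
      rw [if_pos hxy, if_pos hx]
    · rw [if_neg hxy, if_neg (fun hxy' => hxy (congrFun hxy' i))]
  · rw [if_neg h, Matrix.one_apply, if_neg]
    intro hxy; exact h (fun j _ => congrFun hxy j)

lemma embed_conjTranspose (i : Fin k) (f : Matrix (Fin (d i)) (Fin (d i)) ℂ) :
    (embed i f)ᴴ = embed i fᴴ := by
  ext x y
  simp only [Matrix.conjTranspose_apply, embed]
  by_cases h : ∀ j, j ≠ i → x j = y j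
  · have h' : ∀ j, j ≠ i → y j = x j := fun j hj => (h j hj).symm
    rw [if_pos h', if_pos h]
  · have h' : ¬ ∀ j, j ≠ i → y j = x j := fun h' => h fun j hj => (h' j hj).symm
    rw [if_neg h', if_neg h, star_zero]

/-- Sums of functions supported near a base configuration collapse to a sum over one factor. -/
lemma sum_eq_sum_update {M : Type*} [AddCommMonoid M] (i : Fin k) (x : Cfg d) (F : Cfg d → M)
    (hF : ∀ w, ¬(∀ j, j ≠ i → x j = w j) → F w = 0) :
    ∑ w, F w = ∑ t, F (Function.update x i t) := by
  classical
  let e := Equiv.piSplitAt i (fun j => Fin (d j))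
  rw [← Equiv.sum_comp e.symm F, Fintype.sum_prod_type]
  refine Finset.sum_congr rfl fun t _ => ?_
  rw [Finset.sum_eq_single (fun j : {j // j ≠ i} => x j)]
  · have he : e.symm (t, fun j : {j // j ≠ i} => x j) = Function.update x i t := by
      funext j
      by_cases hj : j = i
      · subst hj; simp [e, Equiv.piSplitAt]
      · simp [e, Equiv.piSplitAt, hj]
    rw [he]
  · intro r _ hr
    refine hF _ fun hc => hr ?_
    funext j
    exact (by simpa [e, Equiv.piSplitAt, j.2] using (hc j j.2).symm)
  · intro h; exact absurd (Finset.mem_univ _) h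

lemma embed_mul_apply (i : Fin k) (f : Matrix (Fin (d i)) (Fin (d i)) ℂ) (B : Mat d)
    (x y : Cfg d) :
    (embed i f * B) x y = ∑ t, f (x i) t * B (Function.update x i t) y := by
  rw [Matrix.mul_apply]
  rw [sum_eq_sum_update i x (fun w => embed i f x w * B w y)
    (fun w hw => by show embed i f x w * B w y = 0
                    rw [show embed i f x w = 0 from if_neg hw, zero_mul])]
  refine Finset.sum_congr rfl fun t _ => ?_
  congr 1
  unfold embed
  rw [if_pos fun j hj => (Function.update_of_ne (β := fun j => Fin (d j)) hj t x).symm,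
    Function.update_self]

lemma mul_embed_apply (i : Fin k) (f : Matrix (Fin (d i)) (Fin (d i)) ℂ) (B : Mat d)
    (x y : Cfg d) :
    (B * embed i f) x y = ∑ t, B x (Function.update y i t) * f t (y i) := by
  rw [Matrix.mul_apply]
  rw [sum_eq_sum_update i y (fun w => B x w * embed i f w y)
    (fun w hw => by
      show B x w * embed i f w y = 0
      rw [show embed i f w y = 0 from if_neg fun hc => hw fun j hj => (hc j hj).symm, mul_zero])]
  refine Finset.sum_congr rfl fun t _ => ?_
  congr 1
  unfold embed
  rw [if_pos fun j hj => Function.update_of_ne (β := fun j => Fin (d j)) hj t y,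
    Function.update_self]

lemma embed_mul (i : Fin k) (f g : Matrix (Fin (d i)) (Fin (d i)) ℂ) :
    embed (d := d) i f * embed i g = embed i (f * g) := by
  ext x y
  rw [embed_mul_apply]
  unfold embed
  by_cases h : ∀ j, j ≠ i → x j = y j
  · rw [if_pos h, Matrix.mul_apply]
    refine Finset.sum_congr rfl fun t _ => ?_
    rw [if_pos fun j hj => by rw [Function.update_of_ne hj]; exact h j hj,
      Function.update_self]
  · rw [if_neg h, Finset.sum_eq_zero fun t _ => ?_]
    rw [if_neg fun hc => h fun j hj => by
      have := hc j hj; rwa [Function.update_of_ne hj] at this, mul_zero]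

/-- Sign of a boolean, as a complex number. -/
def sgn (b : Bool) : ℂ := if b then -1 else 1

lemma sgn_mul_self (b : Bool) : sgn b * sgn b = 1 := by cases b <;> simp [sgn]

lemma star_sgn (b : Bool) : star (sgn b) = sgn b := by cases b <;> simp [sgn]

lemma sgn_not (b : Bool) : sgn (!b) = -sgn b := by cases b <;> simp [sgn]

/-- The Weyl-type unitaries on one factor : a cyclic shift combined with signs. -/
def wf (i : Fin k) (p : Fin (d i) × (Fin (d i) → Bool)) :
    Matrix (Fin (d i)) (Fin (d i)) ℂ :=
  fun t r => if t = r + p.1 then sgn (p.2 r) else 0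

lemma wf_mul_conjTranspose (i : Fin k) (p : Fin (d i) × (Fin (d i) → Bool)) :
    wf i p * (wf i p)ᴴ = 1 := by
  obtain ⟨a, σ⟩ := p
  ext t t'
  haveI : NeZero (d i) := ⟨t.pos.ne'⟩
  rw [Matrix.mul_apply, Matrix.one_apply, Finset.sum_eq_single (t - a)]
  · have h1 : wf i (a, σ) t (t - a) = sgn (σ (t - a)) := if_pos (sub_add_cancel t a).symm
    rw [Matrix.conjTranspose_apply, h1]
    by_cases hh : t = t'
    · have h2 : wf i (a, σ) t' (t - a) = sgn (σ (t - a)) := by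
        rw [← hh]; exact h1
      rw [h2, star_sgn, sgn_mul_self, if_pos hh]
    · have h2 : wf i (a, σ) t' (t - a) = 0 :=
        if_neg (fun e => hh ((sub_add_cancel t a).symm.trans e.symm))
      rw [h2, star_zero, mul_zero, if_neg hh]
  · intro r _ hr
    rw [show wf i (a, σ) t r = 0 from
      if_neg (fun ht => hr (by rw [ht, add_sub_cancel_right])), zero_mul]
  · intro hmem; exact absurd (Finset.mem_univ _) hmem

lemma wf_conjTranspose_mul (i : Fin k) (p : Fin (d i) × (Fin (d i) → Bool)) :
    (wf i p)ᴴ * wf i p = 1 := by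
  obtain ⟨a, σ⟩ := p
  ext r r'
  haveI : NeZero (d i) := ⟨r.pos.ne'⟩
  rw [Matrix.mul_apply, Matrix.one_apply, Finset.sum_eq_single (r + a)]
  · have h1 : wf i (a, σ) (r + a) r = sgn (σ r) := if_pos rfl
    rw [Matrix.conjTranspose_apply, h1, star_sgn]
    by_cases hh : r = r'
    · have h2 : wf i (a, σ) (r + a) r' = sgn (σ r') := if_pos (by rw [hh])
      rw [h2, ← hh, sgn_mul_self]
      simp
    · have h2 : wf i (a, σ) (r + a) r' = 0 :=
        if_neg (fun e => hh (add_right_cancel (b := a) e))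
      rw [h2, mul_zero, if_neg hh]
  · intro t _ ht
    rw [Matrix.conjTranspose_apply, show wf i (a, σ) t r = 0 from if_neg ht, star_zero, zero_mul]
  · intro hmem; exact absurd (Finset.mem_univ _) hmem

/-- The Weyl-type unitaries embedded in the full space. -/
def wU (i : Fin k) (p : Fin (d i) × (Fin (d i) → Bool)) : Mat d := embed i (wf i p)

lemma wU_mul_conjTranspose (i : Fin k) (p : Fin (d i) × (Fin (d i) → Bool)) :
    wU i p * (wU (d := d) i p)ᴴ = 1 := by
  rw [wU, embed_conjTranspose, embed_mul, wf_mul_conjTranspose, embed_one]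

lemma wU_conjTranspose_mul (i : Fin k) (p : Fin (d i) × (Fin (d i) → Bool)) :
    (wU (d := d) i p)ᴴ * wU i p = 1 := by
  rw [wU, embed_conjTranspose, embed_mul, wf_conjTranspose_mul, embed_one]

lemma ntrace_single_apply (i : Fin k) (B : Mat d) (x y : Cfg d) :
    ntrace {i} B x y =
      if x i = y i then (d i : ℂ)⁻¹ * ∑ t, B (Function.update x i t) (Function.update y i t)
      else 0 := by
  unfold ntrace
  have hc : (∀ j ∈ ({i} : Finset (Fin k)), x j = y j) ↔ x i = y i := by simp
  by_cases h : x i = y i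
  · rw [if_pos (hc.mpr h), if_pos h, Finset.prod_singleton]
    congr 1
    let e : ((j : {j // j ∈ ({i} : Finset (Fin k))}) → Fin (d j)) ≃ Fin (d i) :=
      { toFun := fun z => z ⟨i, Finset.mem_singleton_self i⟩
        invFun := fun t j =>
          Fin.cast (congrArg d (Finset.mem_singleton.mp j.2).symm) t
        left_inv := fun z => by
          funext j
          obtain ⟨j0, hj0⟩ := j
          have hji : j0 = i := Finset.mem_singleton.mp hj0
          subst hji
          rfl
        right_inv := fun t => rfl }
    rw [← Equiv.sum_comp e.symm]
    refine Finset.sum_congr rfl fun t _ => ?_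
    have h1 : ∀ w : Cfg d, ovr {i} w (e.symm t) = Function.update w i t := by
      intro w
      funext j
      unfold ovr
      by_cases hj : j ∈ ({i} : Finset (Fin k))
      · have hji : j = i := Finset.mem_singleton.mp hj
        subst hji
        rw [dif_pos hj, Function.update_self]
        rfl
      · have hji : j ≠ i := fun e' => hj (by rw [e']; exact Finset.mem_singleton_self i)
        rw [dif_neg hj, Function.update_of_ne hji]
    rw [h1 x, h1 y]
  · rw [if_neg (fun hh => h (hc.mp hh)), if_neg h]

lemma sum_sgn {m : ℕ} (c c' : Fin m) :
    ∑ σ : Fin m → Bool, sgn (σ c) * sgn (σ c') = if c = c' then (2 : ℂ) ^ m else 0 := by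
  by_cases h : c = c'
  · subst h
    rw [if_pos rfl]
    rw [Finset.sum_congr rfl fun σ _ => sgn_mul_self (σ c), Finset.sum_const, Finset.card_univ]
    simp
  · rw [if_neg h]
    have hinv : Function.Involutive (fun σ : Fin m → Bool => Function.update σ c (!(σ c))) := by
      intro σ
      funext j
      by_cases hj : j = c
      · subst hj; simp
      · simp [Function.update_of_ne hj]
    have hkey : ∀ σ : Fin m → Bool,
        sgn (Function.update σ c (!(σ c)) c) * sgn (Function.update σ c (!(σ c)) c') =
          -(sgn (σ c) * sgn (σ c')) := by
      intro σ
      rw [Function.update_self, Function.update_of_ne (fun e => h e.symm), sgn_not, neg_mul]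
    have hre : (∑ σ : Fin m → Bool, sgn (σ c) * sgn (σ c')) =
        -∑ σ : Fin m → Bool, sgn (σ c) * sgn (σ c') := by
      conv_lhs => rw [← Equiv.sum_comp hinv.toPerm
        (fun σ : Fin m → Bool => sgn (σ c) * sgn (σ c'))]
      simp only [Function.Involutive.coe_toPerm]
      exact (Finset.sum_congr rfl fun σ _ => hkey σ).trans (Finset.sum_neg_distrib _)
    linear_combination hre / 2


lemma conj_embed_apply (i : Fin k) (f : Matrix (Fin (d i)) (Fin (d i)) ℂ) (B : Mat d)
    (x y : Cfg d) :
    (embed i f * B * (embed i f)ᴴ) x y =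
      ∑ t, ∑ s, f (x i) s * B (Function.update x i s) (Function.update y i t)
        * star (f (y i) t) := by
  rw [embed_conjTranspose, mul_embed_apply]
  refine Finset.sum_congr rfl fun t _ => ?_
  rw [embed_mul_apply, Finset.sum_mul]
  refine Finset.sum_congr rfl fun s _ => ?_
  rw [Matrix.conjTranspose_apply]

/-- The normalized partial trace over a single factor is an average of unitary conjugates. -/
lemma ntrace_single_rep (i : Fin k) (B : Mat d) :
    ntrace {i} B =
      (((d i : ℂ)) * 2 ^ (d i))⁻¹ •
        ∑ p : Fin (d i) × (Fin (d i) → Bool), wU i p * B * (wU i p)ᴴ := by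
  ext x y
  haveI : NeZero (d i) := ⟨(x i).pos.ne'⟩
  rw [ntrace_single_apply, Matrix.smul_apply, Matrix.sum_apply, smul_eq_mul]
  have key : ∀ a : Fin (d i), ∀ σ : Fin (d i) → Bool,
      (wU i (a, σ) * B * (wU i (a, σ))ᴴ) x y =
        (sgn (σ (x i - a)) * sgn (σ (y i - a))) *
          B (Function.update x i (x i - a)) (Function.update y i (y i - a)) := by
    intro a σ
    rw [show wU i (a, σ) = embed i (wf i (a, σ)) from rfl, conj_embed_apply]
    rw [Finset.sum_eq_single (y i - a)]
    · rw [Finset.sum_eq_single (x i - a)]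
      · have h1 : wf i (a, σ) (x i) (x i - a) = sgn (σ (x i - a)) :=
          if_pos (sub_add_cancel (x i) a).symm
        have h2 : wf i (a, σ) (y i) (y i - a) = sgn (σ (y i - a)) :=
          if_pos (sub_add_cancel (y i) a).symm
        rw [h1, h2, star_sgn]
        ring
      · intro s _ hs
        rw [show wf i (a, σ) (x i) s = 0 from
          if_neg (fun e => hs (by rw [e, add_sub_cancel_right])), zero_mul, zero_mul]
      · intro hmem; exact absurd (Finset.mem_univ _) hmem
    · intro t _ ht
      refine Finset.sum_eq_zero fun s _ => ?_
      rw [show wf i (a, σ) (y i) t = 0 from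
        if_neg (fun e => ht (by rw [e, add_sub_cancel_right])), star_zero, mul_zero]
    · intro hmem; exact absurd (Finset.mem_univ _) hmem
  rw [Fintype.sum_prod_type]
  by_cases h : x i = y i
  · rw [if_pos h]
    have inner : ∀ a : Fin (d i),
        (∑ σ : Fin (d i) → Bool, (wU i (a, σ) * B * (wU i (a, σ))ᴴ) x y) =
          (2 : ℂ) ^ (d i) *
            B (Function.update x i (x i - a)) (Function.update y i (x i - a)) := by
      intro a
      rw [Finset.sum_congr rfl fun σ _ => key a σ, ← Finset.sum_mul, sum_sgn,
        if_pos (by rw [h]), ← h]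
    rw [Finset.sum_congr rfl fun a _ => inner a, ← Finset.mul_sum]
    rw [← Equiv.sum_comp (Equiv.subLeft (x i))
      (fun t => B (Function.update x i t) (Function.update y i t))]
    have hsl : ∀ a : Fin (d i), Equiv.subLeft (x i) a = x i - a := fun a => rfl
    have hpow : ((2 : ℂ) ^ (d i)) ≠ 0 := pow_ne_zero _ two_ne_zero
    have hdi : ((d i : ℂ)) ≠ 0 := Nat.cast_ne_zero.mpr (NeZero.ne (d i))
    field_simp
    rfl
  · rw [if_neg h]
    have hz : ∀ a : Fin (d i),
        (∑ σ : Fin (d i) → Bool, (wU i (a, σ) * B * (wU i (a, σ))ᴴ) x y) = 0 := fun a => by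
      rw [Finset.sum_congr rfl fun σ _ => key a σ, ← Finset.sum_mul, sum_sgn,
        if_neg (fun e => h (sub_left_inj.mp e)), zero_mul]
    rw [Finset.sum_congr rfl fun a _ => hz a, Finset.sum_const, smul_zero, mul_zero]

lemma ovr_empty (x : Cfg d) (z : (i : {j // j ∈ (∅ : Finset (Fin k))}) → Fin (d i)) :
    ovr ∅ x z = x := by
  funext j
  unfold ovr
  rw [dif_neg (Finset.notMem_empty j)]

lemma ntrace_empty (A : Mat d) : ntrace ∅ A = A := by
  ext x y
  unfold ntrace
  rw [if_pos (by simp)]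
  haveI : IsEmpty {j // j ∈ (∅ : Finset (Fin k))} := ⟨fun j => Finset.notMem_empty _ j.2⟩
  rw [Finset.prod_empty, inv_one, one_mul, Fintype.sum_unique]
  rw [ovr_empty, ovr_empty]

lemma sum_insert_split {i : Fin k} {T : Finset (Fin k)} (h : i ∉ T) (x y : Cfg d) (A : Mat d) :
    ∑ z : (j : {j // j ∈ insert i T}) → Fin (d j),
        A (ovr (insert i T) x z) (ovr (insert i T) y z)
      = ∑ t : Fin (d i), ∑ z : (j : {j // j ∈ T}) → Fin (d j),
          A (ovr T (Function.update x i t) z) (ovr T (Function.update y i t) z) := by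
  refine Eq.trans (Fintype.sum_bijective
    (fun z' : (j : {j // j ∈ insert i T}) → Fin (d j) =>
      (((z' ⟨i, Finset.mem_insert_self i T⟩ : Fin (d i)),
        (fun j : {j // j ∈ T} => z' ⟨j, Finset.mem_insert_of_mem j.2⟩)) :
          Fin (d i) × ((j : {j // j ∈ T}) → Fin (d j))))
    ⟨?_, ?_⟩ _
    (fun p : Fin (d i) × ((j : {j // j ∈ T}) → Fin (d j)) =>
      A (ovr T (Function.update x i p.1) p.2) (ovr T (Function.update y i p.1) p.2)) ?_)
    (Fintype.sum_prod_type _)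
  · intro z1 z2 he
    funext j
    obtain ⟨j0, hj0⟩ := j
    rcases Finset.mem_insert.mp hj0 with e | e
    · subst e
      exact congrArg Prod.fst he
    · exact congrFun (congrArg Prod.snd he) ⟨j0, e⟩
  · rintro ⟨t, z⟩
    refine ⟨fun j => if hj : (j : Fin k) ∈ T then z ⟨j, hj⟩
      else Fin.cast (congrArg d ((Finset.mem_insert.mp j.2).resolve_right hj).symm) t, ?_⟩
    refine Prod.ext ?_ ?_
    · show (if hj : i ∈ T then _ else _) = t
      rw [dif_neg h]
      exact Fin.ext rfl
    · funext j
      show (if hj : (j : Fin k) ∈ T then z ⟨j, _⟩ else _) = z j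
      rw [dif_pos j.2]
  · intro z'
    have hov : ∀ w : Cfg d, ovr (insert i T) w z'
        = ovr T (Function.update w i (z' ⟨i, Finset.mem_insert_self i T⟩))
            (fun j : {j // j ∈ T} => z' ⟨j, Finset.mem_insert_of_mem j.2⟩) := fun w => by
      funext j
      unfold ovr
      by_cases hjT : j ∈ T
      · rw [dif_pos (Finset.mem_insert_of_mem hjT), dif_pos hjT]
      · by_cases hji : j = i
        · subst hji
          rw [dif_pos (Finset.mem_insert_self j T), dif_neg hjT, Function.update_self]
        · rw [dif_neg (fun hmem => (Finset.mem_insert.mp hmem).elim hji hjT),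
            dif_neg hjT, Function.update_of_ne hji]
    rw [hov x, hov y]

lemma ntrace_insert {i : Fin k} {T : Finset (Fin k)} (h : i ∉ T) (A : Mat d) :
    ntrace (insert i T) A = ntrace {i} (ntrace T A) := by
  ext x y
  rw [ntrace_single_apply]
  unfold ntrace
  have hji : ∀ j ∈ T, j ≠ i := fun j hj e => h (by rw [← e]; exact hj)
  by_cases h2 : ∀ j ∈ T, x j = y j
  · by_cases h1 : x i = y i
    · rw [if_pos (fun j hj => by
        rcases Finset.mem_insert.mp hj with e | e
        · rw [e]; exact h1
        · exact h2 j e), if_pos h1]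
      rw [Finset.prod_insert h, sum_insert_split h x y A]
      rw [Finset.sum_congr rfl fun t (_ : t ∈ Finset.univ) => if_pos (fun j hj => by
        rw [Function.update_of_ne (hji j hj), Function.update_of_ne (hji j hj)]
        exact h2 j hj)]
      rw [← Finset.mul_sum, mul_inv, mul_assoc]
    · rw [if_neg (fun hc => h1 (hc i (Finset.mem_insert_self i T))), if_neg h1]
  · rw [if_neg (fun hc => h2 (fun j hj => hc j (Finset.mem_insert_of_mem hj)))]
    by_cases h1 : x i = y i
    · rw [if_pos h1, Finset.sum_eq_zero fun t (_ : t ∈ Finset.univ) => if_neg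
        (fun hcc => h2 fun j hj => by
          have := hcc j hj
          rwa [Function.update_of_ne (hji j hj), Function.update_of_ne (hji j hj)] at this),
        mul_zero]
    · rw [if_neg h1]

lemma ntrace_sub (T : Finset (Fin k)) (X Y : Mat d) :
    ntrace T (X - Y) = ntrace T X - ntrace T Y := by
  ext x y
  rw [Matrix.sub_apply]
  unfold ntrace
  simp only [Matrix.sub_apply]
  split_ifs with h
  · rw [Finset.sum_sub_distrib, mul_sub]
  · rw [sub_zero]

lemma ovr_update {i : Fin k} {T : Finset (Fin k)} (h : i ∉ T) (x : Cfg d)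
    (z : (j : {j // j ∈ T}) → Fin (d j)) (t : Fin (d i)) :
    Function.update (ovr T x z) i t = ovr T (Function.update x i t) z := by
  funext j
  by_cases hj : j = i
  · subst hj
    rw [Function.update_self]
    unfold ovr
    rw [dif_neg h, Function.update_self]
  · rw [Function.update_of_ne hj]
    unfold ovr
    by_cases hjT : j ∈ T
    · rw [dif_pos hjT, dif_pos hjT]
    · rw [dif_neg hjT, dif_neg hjT, Function.update_of_ne hj]

lemma ovr_apply_not_mem {i : Fin k} {T : Finset (Fin k)} (h : i ∉ T) (x : Cfg d)
    (z : (j : {j // j ∈ T}) → Fin (d j)) : ovr T x z i = x i := by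
  unfold ovr
  rw [dif_neg h]

lemma ntrace_mul_embed {i : Fin k} {T : Finset (Fin k)} (h : i ∉ T) (A : Mat d)
    (f : Matrix (Fin (d i)) (Fin (d i)) ℂ) :
    ntrace T (A * embed i f) = ntrace T A * embed i f := by
  ext x y
  rw [mul_embed_apply]
  unfold ntrace
  by_cases hc : ∀ j ∈ T, x j = y j
  · rw [if_pos hc]
    have hin : ∀ z, (A * embed i f) (ovr T x z) (ovr T y z)
        = ∑ t, A (ovr T x z) (ovr T (Function.update y i t) z) * f t (y i) := fun z => by
      rw [mul_embed_apply]
      refine Finset.sum_congr rfl fun t _ => ?_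
      rw [ovr_update h, ovr_apply_not_mem h]
    rw [Finset.sum_congr rfl fun z _ => hin z, Finset.sum_comm, Finset.mul_sum]
    refine Finset.sum_congr rfl fun t _ => ?_
    rw [if_pos (fun j hj => by
      rw [Function.update_of_ne (fun e => h (by rw [← e]; exact hj))]; exact hc j hj)]
    rw [← Finset.sum_mul, ← mul_assoc]
  · rw [if_neg hc]
    exact (Finset.sum_eq_zero fun t _ => by
      rw [if_neg (fun hcc => hc (fun j hj => by
        have := hcc j hj
        rwa [Function.update_of_ne (fun e => h (by rw [← e]; exact hj))] at this)), zero_mul]).symm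

lemma ntrace_embed_mul {i : Fin k} {T : Finset (Fin k)} (h : i ∉ T) (A : Mat d)
    (f : Matrix (Fin (d i)) (Fin (d i)) ℂ) :
    ntrace T (embed i f * A) = embed i f * ntrace T A := by
  ext x y
  rw [embed_mul_apply]
  unfold ntrace
  by_cases hc : ∀ j ∈ T, x j = y j
  · rw [if_pos hc]
    have hin : ∀ z, (embed i f * A) (ovr T x z) (ovr T y z)
        = ∑ t, f (x i) t * A (ovr T (Function.update x i t) z) (ovr T y z) := fun z => by
      rw [embed_mul_apply]
      refine Finset.sum_congr rfl fun t _ => ?_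
      rw [ovr_update h, ovr_apply_not_mem h]
    rw [Finset.sum_congr rfl fun z _ => hin z, Finset.sum_comm, Finset.mul_sum]
    refine Finset.sum_congr rfl fun t _ => ?_
    rw [if_pos (fun j hj => by
      rw [Function.update_of_ne (fun e => h (by rw [← e]; exact hj))]; exact hc j hj)]
    rw [← Finset.mul_sum, mul_left_comm]
  · rw [if_neg hc]
    exact (Finset.sum_eq_zero fun t _ => by
      rw [if_neg (fun hcc => hc (fun j hj => by
        have := hcc j hj
        rwa [Function.update_of_ne (fun e => h (by rw [← e]; exact hj))] at this)), mul_zero]).symm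

lemma wU_norm_le_one (i : Fin k) (p : Fin (d i) × (Fin (d i) → Bool)) :
    ‖wU (d := d) i p‖ ≤ 1 :=
  norm_le_one_of_unitary (wU_conjTranspose_mul i p)

lemma wU_conjTranspose_norm_le_one (i : Fin k) (p : Fin (d i) × (Fin (d i) → Bool)) :
    ‖(wU (d := d) i p)ᴴ‖ ≤ 1 := by
  rw [Matrix.l2_opNorm_conjTranspose]
  exact wU_norm_le_one i p

lemma card_eq (i : Fin k) :
    (Fintype.card (Fin (d i) × (Fin (d i) → Bool)) : ℝ) = (d i : ℝ) * 2 ^ (d i) := by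
  simp [Fintype.card_fun]

lemma norm_inv_scalar (i : Fin k) :
    ‖(((d i : ℂ)) * 2 ^ (d i))⁻¹‖ = ((d i : ℝ) * 2 ^ (d i))⁻¹ := by
  rw [norm_inv, norm_mul, norm_pow]
  norm_num

lemma mat_eq_zero_of_isEmpty (hE : IsEmpty (Cfg d)) (M : Mat d) : M = 0 := by
  ext x y
  exact hE.elim x

lemma ntrace_single_norm_le (i : Fin k) (B : Mat d) : ‖ntrace {i} B‖ ≤ ‖B‖ := by
  by_cases hE : Nonempty (Cfg d)
  · haveI : NeZero (d i) := ⟨((Classical.choice hE) i).pos.ne'⟩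
    rw [ntrace_single_rep]
    rw [norm_smul]
    calc ‖(((d i : ℂ)) * 2 ^ (d i))⁻¹‖ *
          ‖∑ p : Fin (d i) × (Fin (d i) → Bool), wU i p * B * (wU i p)ᴴ‖
        ≤ ‖(((d i : ℂ)) * 2 ^ (d i))⁻¹‖ *
          ∑ p : Fin (d i) × (Fin (d i) → Bool), ‖wU i p * B * (wU i p)ᴴ‖ := by
          refine mul_le_mul_of_nonneg_left (norm_sum_le _ _) (norm_nonneg _)
      _ ≤ ‖(((d i : ℂ)) * 2 ^ (d i))⁻¹‖ *
          ∑ p : Fin (d i) × (Fin (d i) → Bool), ‖B‖ := by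
          refine mul_le_mul_of_nonneg_left (Finset.sum_le_sum fun p _ => ?_) (norm_nonneg _)
          calc ‖wU i p * B * (wU i p)ᴴ‖ ≤ ‖wU i p * B‖ * ‖(wU i p)ᴴ‖ :=
                Matrix.l2_opNorm_mul _ _
            _ ≤ ‖wU i p * B‖ * 1 :=
                mul_le_mul_of_nonneg_left (wU_conjTranspose_norm_le_one i p) (norm_nonneg _)
            _ = ‖wU i p * B‖ := mul_one _
            _ ≤ ‖wU i p‖ * ‖B‖ := Matrix.l2_opNorm_mul _ _
            _ ≤ 1 * ‖B‖ :=
                mul_le_mul_of_nonneg_right (wU_norm_le_one i p) (norm_nonneg _)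
            _ = ‖B‖ := one_mul _
      _ = ‖B‖ := by
          rw [Finset.sum_const, Finset.card_univ, nsmul_eq_mul, norm_inv_scalar, ← mul_assoc,
            card_eq]
          rw [inv_mul_cancel₀ (by
            have h1 : (0:ℝ) < (d i : ℝ) := by
              exact_mod_cast Nat.pos_of_ne_zero (NeZero.ne (d i))
            positivity), one_mul]
  · have hIE : IsEmpty (Cfg d) := not_nonempty_iff.mp hE
    rw [mat_eq_zero_of_isEmpty hIE (ntrace {i} B), mat_eq_zero_of_isEmpty hIE B]

lemma ntrace_norm_le (T : Finset (Fin k)) (X : Mat d) : ‖ntrace T X‖ ≤ ‖X‖ := by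
  classical
  induction T using Finset.induction_on with
  | empty => rw [ntrace_empty]
  | @insert i T hiT ih =>
    rw [ntrace_insert hiT]
    exact le_trans (ntrace_single_norm_le i _) ih

lemma ntrace_single_sub_le (i : Fin k) [NeZero (d i)] (B : Mat d) {r : ℝ}
    (hb : ∀ p : Fin (d i) × (Fin (d i) → Bool), ‖B * wU i p - wU i p * B‖ ≤ r) :
    ‖ntrace {i} B - B‖ ≤ r := by
  have hcard : ((Fintype.card (Fin (d i) × (Fin (d i) → Bool)) : ℂ))
      = ((d i : ℂ)) * 2 ^ (d i) := by
    simp [Fintype.card_fun]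
  have hne : ((d i : ℂ)) * 2 ^ (d i) ≠ 0 :=
    mul_ne_zero (Nat.cast_ne_zero.mpr (NeZero.ne (d i))) (pow_ne_zero _ two_ne_zero)
  have hrne : ((d i : ℝ)) * 2 ^ (d i) ≠ 0 := by
    have h1 : (0:ℝ) < (d i : ℝ) := by
      exact_mod_cast Nat.pos_of_ne_zero (NeZero.ne (d i))
    positivity
  have hrep : ntrace {i} B - B =
      (((d i : ℂ)) * 2 ^ (d i))⁻¹ •
        ∑ p : Fin (d i) × (Fin (d i) → Bool), (wU i p * B * (wU i p)ᴴ - B) := by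
    rw [Finset.sum_sub_distrib, smul_sub, ← ntrace_single_rep]
    congr 1
    rw [Finset.sum_const, Finset.card_univ, ← Nat.cast_smul_eq_nsmul ℂ, smul_smul, hcard,
      inv_mul_cancel₀ hne, one_smul]
  have hfac : ∀ p : Fin (d i) × (Fin (d i) → Bool),
      wU i p * B * (wU i p)ᴴ - B = (wU i p * B - B * wU i p) * (wU i p)ᴴ := fun p => by
    rw [sub_mul]
    congr 1
    rw [mul_assoc, wU_mul_conjTranspose, mul_one]
  have hterm : ∀ p : Fin (d i) × (Fin (d i) → Bool), ‖wU i p * B * (wU i p)ᴴ - B‖ ≤ r :=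
    fun p => by
    rw [hfac p]
    calc ‖(wU i p * B - B * wU i p) * (wU i p)ᴴ‖
        ≤ ‖wU i p * B - B * wU i p‖ * ‖(wU i p)ᴴ‖ := Matrix.l2_opNorm_mul _ _
      _ ≤ ‖wU i p * B - B * wU i p‖ * 1 :=
          mul_le_mul_of_nonneg_left (wU_conjTranspose_norm_le_one i p) (norm_nonneg _)
      _ = ‖B * wU i p - wU i p * B‖ := by rw [mul_one, norm_sub_rev]
      _ ≤ r := hb p
  rw [hrep, norm_smul]
  calc ‖(((d i : ℂ)) * 2 ^ (d i))⁻¹‖ *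
        ‖∑ p : Fin (d i) × (Fin (d i) → Bool), (wU i p * B * (wU i p)ᴴ - B)‖
      ≤ ‖(((d i : ℂ)) * 2 ^ (d i))⁻¹‖ *
        ∑ p : Fin (d i) × (Fin (d i) → Bool), ‖wU i p * B * (wU i p)ᴴ - B‖ :=
        mul_le_mul_of_nonneg_left (norm_sum_le _ _) (norm_nonneg _)
    _ ≤ ‖(((d i : ℂ)) * 2 ^ (d i))⁻¹‖ *
        ∑ _p : Fin (d i) × (Fin (d i) → Bool), r :=
        mul_le_mul_of_nonneg_left (Finset.sum_le_sum fun p _ => hterm p) (norm_nonneg _)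
    _ = r := by
        rw [Finset.sum_const, Finset.card_univ, nsmul_eq_mul, norm_inv_scalar, ← mul_assoc,
          card_eq, inv_mul_cancel₀ hrne, one_mul]

/-- The set of commutator norms for unitaries supported on factor `i`. -/
def commSet (A : Mat d) (i : Fin k) : Set ℝ :=
  {c : ℝ | ∃ u : Mat d, u * uᴴ = 1 ∧ uᴴ * u = 1 ∧ FactorSupported i u ∧
    c = opNorm (A * u - u * A)}

lemma commSet_bddAbove (A : Mat d) (i : Fin k) : BddAbove (commSet A i) := by
  refine ⟨2 * ‖A‖, ?_⟩
  rintro c ⟨u, h1, h2, _, rfl⟩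
  rw [opNorm_eq]
  have hu : ‖u‖ ≤ 1 := norm_le_one_of_unitary h2
  calc ‖A * u - u * A‖ ≤ ‖A * u‖ + ‖u * A‖ := norm_sub_le _ _
    _ ≤ ‖A‖ * ‖u‖ + ‖u‖ * ‖A‖ :=
        add_le_add (Matrix.l2_opNorm_mul _ _) (Matrix.l2_opNorm_mul _ _)
    _ ≤ ‖A‖ * 1 + 1 * ‖A‖ :=
        add_le_add (mul_le_mul_of_nonneg_left hu (norm_nonneg _))
          (mul_le_mul_of_nonneg_right hu (norm_nonneg _))
    _ = 2 * ‖A‖ := by ring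

lemma commSet_zero_mem (A : Mat d) (i : Fin k) : (0:ℝ) ∈ commSet A i :=
  ⟨1, by rw [Matrix.conjTranspose_one, mul_one], by rw [Matrix.conjTranspose_one, mul_one],
    ⟨1, fun x y => (congrFun (congrFun (embed_one i) x) y).symm⟩,
    by rw [mul_one, one_mul, sub_self, opNorm_eq, norm_zero]⟩

lemma commSet_sSup_nonneg (A : Mat d) (i : Fin k) : 0 ≤ sSup (commSet A i) :=
  le_csSup (commSet_bddAbove A i) (commSet_zero_mem A i)

/-- The normalized partial trace satisfies
`‖𝑡𝑟̃_T(A) - A‖ ≤ ∑_{i∈T} sup{‖[A,u]‖ : u unitary supported on the i-th factor}`. -/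
theorem ntrace_sub_le_sum_commutators (T : Finset (Fin k))
    (A : Matrix ((i : Fin k) → Fin (d i)) ((i : Fin k) → Fin (d i)) ℂ) :
    opNorm (ntrace T A - A) ≤
      ∑ i ∈ T, sSup {c : ℝ |
        ∃ u : Matrix ((j : Fin k) → Fin (d j)) ((j : Fin k) → Fin (d j)) ℂ,
          u * uᴴ = 1 ∧ uᴴ * u = 1 ∧ FactorSupported i u ∧
            c = opNorm (A * u - u * A)} := by
  classical
  suffices h : opNorm (ntrace T A - A) ≤ ∑ i ∈ T, sSup (commSet A i) by exact h
  induction T using Finset.induction_on with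
  | empty =>
    rw [ntrace_empty, sub_self, Finset.sum_empty, opNorm_eq, norm_zero]
  | @insert i T hiT ih =>
    rw [Finset.sum_insert hiT, ntrace_insert hiT, opNorm_eq]
    by_cases hE : Nonempty (Cfg d)
    · haveI : NeZero (d i) := ⟨((Classical.choice hE) i).pos.ne'⟩
      have h1 : ‖ntrace {i} (ntrace T A) - ntrace T A‖ ≤ sSup (commSet A i) := by
        refine ntrace_single_sub_le i (ntrace T A) (fun p => ?_)
        have he : ntrace T A * wU i p - wU i p * ntrace T A
            = ntrace T (A * wU i p - wU i p * A) := by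
          rw [ntrace_sub]
          simp only [wU]
          rw [ntrace_mul_embed hiT, ntrace_embed_mul hiT]
        rw [he]
        refine le_trans (ntrace_norm_le T _) ?_
        exact le_csSup (commSet_bddAbove A i) ⟨wU i p, wU_mul_conjTranspose i p,
          wU_conjTranspose_mul i p, factorSupported_embed i (wf i p), (opNorm_eq _).symm⟩
      have h2 : ‖ntrace T A - A‖ ≤ ∑ j ∈ T, sSup (commSet A j) := by
        rw [← opNorm_eq]; exact ih
      calc ‖ntrace {i} (ntrace T A) - A‖
          = ‖(ntrace {i} (ntrace T A) - ntrace T A) + (ntrace T A - A)‖ := by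
            rw [sub_add_sub_cancel]
        _ ≤ ‖ntrace {i} (ntrace T A) - ntrace T A‖ + ‖ntrace T A - A‖ := norm_add_le _ _
        _ ≤ sSup (commSet A i) + ∑ j ∈ T, sSup (commSet A j) := add_le_add h1 h2
    · have hIE : IsEmpty (Cfg d) := not_nonempty_iff.mp hE
      rw [mat_eq_zero_of_isEmpty hIE (ntrace {i} (ntrace T A) - A), norm_zero]
      have hs : 0 ≤ ∑ j ∈ T, sSup (commSet A j) :=
        Finset.sum_nonneg fun j _ => commSet_sSup_nonneg A j
      have := commSet_sSup_nonneg A i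
      linarith

end CMI
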